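/- Let J : M_p([0,∞)×{0,1}) → ℕ ∪ {∞} be the map ξ ↦ ξ([0,τ⁰(ξ)]×{1}), where τ⁰(ξ) = sup{t ≥ 0 : ξ([0,t]×{0}) = 0}. Then J is continuous (with respect to vague convergence of point measures) at every point measure ξ whose atoms have pairwise distinct time coordinates and for which τ⁰(ξ) is finite and is not the time coordinate of any atom of ξ(·×{1}). -/

import Mathlib

open MeasureTheory Filter
set_option maxHeartbeats 2000000

section Aux
open Set Metric


lemma exists_bump (a b η : ℝ) (hab : a ≤ b) (hη : 0 < η) :
    ∃ g : ℝ → ℝ, Continuous g ∧ (∀ t, 0 ≤ g t) ∧ (∀ t, g t ≤ 1) ∧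
      (∀ t ∈ Icc a b, g t = 1) ∧ (∀ t, t ∉ Icc (a - η) (b + η) → g t = 0) := by
  have hne : (Icc a b).Nonempty := nonempty_Icc.2 hab
  refine ⟨fun t => 1 - min 1 (infDist t (Icc a b) / η), ?_, ?_, ?_, ?_, ?_⟩
  · exact continuous_const.sub (continuous_const.min ((continuous_infDist_pt _).div_const η))
  · intro t
    have h1 : min 1 (infDist t (Icc a b) / η) ≤ 1 := min_le_left _ _
    linarith
  · intro t
    have h0 : 0 ≤ min 1 (infDist t (Icc a b) / η) :=
      le_min zero_le_one (div_nonneg infDist_nonneg hη.le)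
    linarith
  · intro t ht
    simp only []
    rw [infDist_zero_of_mem ht]
    norm_num
  · intro t ht
    have hd : η ≤ infDist t (Icc a b) := by
      by_contra h
      obtain ⟨y, hy, hdy⟩ := (infDist_lt_iff hne).1 (not_le.1 h)
      rw [Real.dist_eq] at hdy
      rw [mem_Icc] at hy
      rcases not_and_or.1 (fun h' => ht (mem_Icc.2 h')) with h' | h' <;>
        [(have := not_le.1 h'); (have := not_le.1 h')] <;>
        cases abs_lt.1 hdy <;> linarith
    have : min 1 (infDist t (Icc a b) / η) = 1 :=
      min_eq_left ((one_le_div hη).2 hd)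
    simp only []
    rw [this]; ring

lemma tsum_bool01 {ι : Type} [Countable ι] (f : ι → ENNReal) (h01 : ∀ i, f i = 0 ∨ f i = 1)
    (hfin : ∑' i, f i ≠ ⊤) : ∃ m : ℕ, ∑' i, f i = m := by
  classical
  have hsupp : (Function.support f).Finite := by
    by_contra hinf
    obtain ⟨n, hn⟩ := ENNReal.exists_nat_gt hfin
    obtain ⟨t, hts, htc⟩ := Set.Infinite.exists_subset_card_eq hinf n
    have hle : (n : ENNReal) ≤ ∑' i, f i := by
      calc (n : ENNReal) = ∑ i ∈ t, f i := by
            rw [Finset.sum_congr rfl (fun i hi => ((h01 i).resolve_left (hts hi)))]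
            simp [htc]
        _ ≤ ∑' i, f i := ENNReal.sum_le_tsum t
    exact absurd hn (not_lt.2 hle)
  refine ⟨hsupp.toFinset.card, ?_⟩
  rw [tsum_eq_sum (s := hsupp.toFinset) (fun i hi => by
    simpa using (fun h => hi (hsupp.mem_toFinset.2 h)))]
  rw [Finset.sum_congr rfl (fun i hi => (h01 i).resolve_left (hsupp.mem_toFinset.1 hi))]
  simp

lemma pm_apply {ι : Type} [Countable ι] (x : ι → ℝ × Bool) {A : Set (ℝ × Bool)}
    (hA : MeasurableSet A) :
    Measure.sum (fun i => Measure.dirac (x i)) A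
      = ∑' i, A.indicator (fun _ => (1 : ENNReal)) (x i) := by
  rw [Measure.sum_apply _ hA]
  exact tsum_congr fun i => by rw [Measure.dirac_apply' _ hA]; rfl

lemma pm_one_le {ι : Type} [Countable ι] (x : ι → ℝ × Bool) {A : Set (ℝ × Bool)}
    (hA : MeasurableSet A) (h : Measure.sum (fun i => Measure.dirac (x i)) A ≠ 0) :
    1 ≤ Measure.sum (fun i => Measure.dirac (x i)) A := by
  rw [pm_apply x hA] at h ⊢
  have : ∃ i, A.indicator (fun _ => (1 : ENNReal)) (x i) ≠ 0 := by
    by_contra hc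
    push_neg at hc
    exact h (by simp [hc])
  obtain ⟨i, hi⟩ := this
  have hxi : x i ∈ A := by
    by_contra h'
    exact hi (Set.indicator_of_notMem h' _)
  calc (1 : ENNReal) = A.indicator (fun _ => (1 : ENNReal)) (x i) := by
        rw [Set.indicator_of_mem hxi]
    _ ≤ _ := ENNReal.le_tsum i

lemma pm_nat {ι : Type} [Countable ι] (x : ι → ℝ × Bool) {A : Set (ℝ × Bool)}
    (hA : MeasurableSet A) (hfin : Measure.sum (fun i => Measure.dirac (x i)) A ≠ ⊤) :
    ∃ m : ℕ, Measure.sum (fun i => Measure.dirac (x i)) A = m := by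
  rw [pm_apply x hA] at hfin ⊢
  exact tsum_bool01 _ (fun i => by by_cases h : x i ∈ A <;> simp [h]) hfin

lemma pm_neg_null {ι : Type} [Countable ι] (x : ι → ℝ × Bool) (hx : ∀ i, 0 ≤ (x i).1) :
    Measure.sum (fun i => Measure.dirac (x i)) {p : ℝ × Bool | p.1 < 0} = 0 := by
  have hA : MeasurableSet {p : ℝ × Bool | p.1 < 0} :=
    measurableSet_lt measurable_fst measurable_const
  rw [pm_apply x hA]
  have : ∀ i, ({p : ℝ × Bool | p.1 < 0}).indicator (fun _ => (1 : ENNReal)) (x i) = 0 :=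
    fun i => Set.indicator_of_notMem (by simpa using not_lt.2 (hx i)) _
  simp [this]

lemma integral_le_meas {μ : Measure (ℝ × Bool)} {f : ℝ × Bool → ℝ} {B : Set (ℝ × Bool)}
    (hf : Continuous f) (h0 : ∀ p, 0 ≤ f p) (hB : MeasurableSet B)
    (hle : ∀ᵐ p ∂μ, f p ≤ B.indicator (fun _ => (1 : ℝ)) p) (hfin : μ B ≠ ⊤) :
    Integrable f μ ∧ ∫ p, f p ∂μ ≤ (μ B).toReal := by
  have hlint : ∫⁻ p, ENNReal.ofReal (f p) ∂μ ≤ μ B := by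
    calc ∫⁻ p, ENNReal.ofReal (f p) ∂μ
        ≤ ∫⁻ p, B.indicator (fun _ => (1 : ENNReal)) p ∂μ := by
          refine lintegral_mono_ae ?_
          filter_upwards [hle] with p hp
          by_cases hpB : p ∈ B
          · rw [Set.indicator_of_mem hpB] at hp ⊢
            simpa using ENNReal.ofReal_le_one.2 hp
          · rw [Set.indicator_of_notMem hpB] at hp ⊢
            simp [le_antisymm hp (h0 p)]
      _ = μ B := lintegral_indicator_one hB
  have hint : Integrable f μ := by
    refine ⟨hf.aestronglyMeasurable, ?_⟩
    rw [hasFiniteIntegral_iff_ofReal (Eventually.of_forall h0)]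
    exact lt_of_le_of_lt hlint hfin.lt_top
  refine ⟨hint, ?_⟩
  rw [integral_eq_lintegral_of_nonneg_ae (Eventually.of_forall h0) hf.aestronglyMeasurable]
  exact ENNReal.toReal_mono hfin hlint

lemma meas_le_integral {μ : Measure (ℝ × Bool)} {f : ℝ × Bool → ℝ} {A : Set (ℝ × Bool)}
    (h0 : ∀ p, 0 ≤ f p) (hA : MeasurableSet A)
    (h1 : ∀ p ∈ A, 1 ≤ f p) (hint : Integrable f μ) :
    μ A ≠ ⊤ ∧ (μ A).toReal ≤ ∫ p, f p ∂μ := by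
  have hlint : μ A ≤ ∫⁻ p, ENNReal.ofReal (f p) ∂μ := by
    rw [← lintegral_indicator_one hA]
    refine lintegral_mono fun p => ?_
    by_cases hpA : p ∈ A
    · rw [Set.indicator_of_mem hpA]
      simpa using ENNReal.one_le_ofReal.2 (h1 p hpA)
    · rw [Set.indicator_of_notMem hpA]
      simp
  have hfin2 : ∫⁻ p, ENNReal.ofReal (f p) ∂μ < ⊤ :=
    (hasFiniteIntegral_iff_ofReal (Eventually.of_forall h0)).1 hint.2
  refine ⟨(lt_of_le_of_lt hlint hfin2).ne, ?_⟩
  rw [integral_eq_lintegral_of_nonneg_ae (Eventually.of_forall h0) hint.aestronglyMeasurable]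
  exact ENNReal.toReal_mono hfin2.ne hlint

lemma mk_test (a b η : ℝ) (hab : a ≤ b) (hη : 0 < η) (s : Bool) :
    ∃ f : ℝ × Bool → ℝ, Continuous f ∧ HasCompactSupport f ∧
      (∀ p, 0 ≤ f p) ∧ (∀ p, f p ≤ 1) ∧
      (∀ p : ℝ × Bool, p.1 ∈ Icc a b → p.2 = s → f p = 1) ∧
      (∀ p : ℝ × Bool, f p ≠ 0 → p.1 ∈ Icc (a - η) (b + η) ∧ p.2 = s) := by
  obtain ⟨g, hgc, hg0, hg1, hgone, hgsupp⟩ := exists_bump a b η hab hη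
  refine ⟨fun p => g p.1 * (if p.2 = s then 1 else 0), ?_, ?_, ?_, ?_, ?_, ?_⟩
  · exact (hgc.comp continuous_fst).mul
      ((continuous_of_discreteTopology (f := fun l : Bool => if l = s then (1:ℝ) else 0)).comp
        continuous_snd)
  · refine HasCompactSupport.intro (isCompact_Icc.prod isCompact_univ
      (s := Icc (a - η) (b + η))) fun p hp => ?_
    have : p.1 ∉ Icc (a - η) (b + η) := fun h => hp ⟨h, trivial⟩
    simp [hgsupp _ this]
  · intro p
    by_cases h : p.2 = s <;> simp [h, hg0 p.1]
  · intro p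
    by_cases h : p.2 = s <;> simp [h, hg1 p.1]
  · intro p hp hs
    simp [hs, hgone _ hp]
  · intro p hp
    by_cases h : p.2 = s
    · refine ⟨?_, h⟩
      by_contra h'
      exact hp (by simp [h, hgsupp _ h'])
    · exact absurd (by simp [h]) hp

lemma mk_testAll (a b η : ℝ) (hab : a ≤ b) (hη : 0 < η) :
    ∃ f : ℝ × Bool → ℝ, Continuous f ∧ HasCompactSupport f ∧
      (∀ p, 0 ≤ f p) ∧ (∀ p, f p ≤ 1) ∧
      (∀ p : ℝ × Bool, p.1 ∈ Icc a b → f p = 1) ∧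
      (∀ p : ℝ × Bool, f p ≠ 0 → p.1 ∈ Icc (a - η) (b + η)) := by
  obtain ⟨g, hgc, hg0, hg1, hgone, hgsupp⟩ := exists_bump a b η hab hη
  refine ⟨fun p => g p.1, hgc.comp continuous_fst, ?_, fun p => hg0 p.1, fun p => hg1 p.1,
    fun p hp => hgone _ hp, fun p hp => by by_contra h; exact hp (hgsupp _ h)⟩
  refine HasCompactSupport.intro (isCompact_Icc.prod isCompact_univ
    (s := Icc (a - η) (b + η))) fun p hp => ?_
  exact hgsupp _ fun h => hp ⟨h, trivial⟩

end Aux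

/-- A point measure on `[0,∞) × {0,1}` (labels encoded by `Bool`, with `false` the label 0
and `true` the label 1): a countable sum of Dirac masses at points with nonnegative
time coordinate. -/
def IsPointMeasure (ξ : Measure (ℝ × Bool)) : Prop :=
  ∃ (ι : Type) (_ : Countable ι) (x : ι → ℝ × Bool),
    (∀ i, 0 ≤ (x i).1) ∧ ξ = Measure.sum (fun i => Measure.dirac (x i))

/-- Vague convergence of measures on `ℝ × Bool`: convergence of the integrals of every
continuous compactly supported function. -/
def VagueTendsto (ξn : ℕ → Measure (ℝ × Bool)) (ξ : Measure (ℝ × Bool)) : Prop :=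
  ∀ f : ℝ × Bool → ℝ, Continuous f → HasCompactSupport f →
    Tendsto (fun n => ∫ x, f x ∂(ξn n)) atTop (nhds (∫ x, f x ∂ξ))

/-- `τ⁰(ξ)`: the time of the first label-0 event of `ξ`. -/
noncomputable def tau0 (ξ : Measure (ℝ × Bool)) : ℝ :=
  sSup {t : ℝ | 0 ≤ t ∧ ξ (Set.Icc 0 t ×ˢ ({false} : Set Bool)) = 0}

/-- `J(ξ) = ξ([0, τ⁰(ξ)] × {1})`: the number of label-1 events before the first
label-0 event. -/
noncomputable def Jmap (ξ : Measure (ℝ × Bool)) : ENNReal :=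
  ξ (Set.Icc 0 (tau0 ξ) ×ˢ ({true} : Set Bool))

/-- `J` is (sequentially) continuous with respect to vague convergence of
point measures, at every locally finite point measure `ξ` whose atoms have pairwise
distinct time coordinates and for which `τ⁰(ξ)` is finite and is not the time coordinate
of any atom of `ξ(· × {1})`. -/
theorem Jmap_continuous_at
    (ξ : Measure (ℝ × Bool)) [IsLocallyFiniteMeasure ξ]
    (hpoint : ∃ (ι : Type) (_ : Countable ι) (x : ι → ℝ × Bool),
      (∀ i, 0 ≤ (x i).1) ∧ ξ = Measure.sum (fun i => Measure.dirac (x i)) ∧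
        Function.Injective (fun i => (x i).1))
    (hne : {t : ℝ | 0 ≤ t ∧ ξ (Set.Icc 0 t ×ˢ ({false} : Set Bool)) = 0}.Nonempty)
    (hbdd : BddAbove {t : ℝ | 0 ≤ t ∧ ξ (Set.Icc 0 t ×ˢ ({false} : Set Bool)) = 0})
    (hnoatom : ξ ({tau0 ξ} ×ˢ ({true} : Set Bool)) = 0)
    (ξn : ℕ → Measure (ℝ × Bool)) (hξn : ∀ n, IsPointMeasure (ξn n))
    (hconv : VagueTendsto ξn ξ) :
    Tendsto (fun n => Jmap (ξn n)) atTop (nhds (Jmap ξ)) := by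
  classical
  obtain ⟨ι, hι, x, hx0, hxsum, hxinj⟩ := hpoint
  haveI := hι
  set τ := tau0 ξ with hτdef
  have hmeas : ∀ (a b : ℝ) (s : Bool), MeasurableSet (Set.Icc a b ×ˢ ({s} : Set Bool)) :=
    fun a b s => measurableSet_Icc.prod (measurableSet_singleton s)
  obtain ⟨t₀, ht₀⟩ := hne
  have hτ0 : 0 ≤ τ := le_trans ht₀.1 (le_csSup hbdd ht₀)
  have hξone : ∀ A : Set (ℝ × Bool), MeasurableSet A → ξ A ≠ 0 → 1 ≤ ξ A := by
    intro A hA h; rw [hxsum] at h ⊢; exact pm_one_le x hA h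
  have hξnat : ∀ A : Set (ℝ × Bool), MeasurableSet A → ξ A ≠ ⊤ → ∃ m : ℕ, ξ A = m := by
    intro A hA h; rw [hxsum] at h ⊢; exact pm_nat x hA h
  have hξae : ∀ᵐ p ∂ξ, ¬ p.1 < 0 := by
    have h0 : ξ {p : ℝ × Bool | p.1 < 0} = 0 := by rw [hxsum]; exact pm_neg_null x hx0
    refine ae_iff.2 ?_
    simpa only [not_not] using h0
  have hξfin : ∀ (A : Set (ℝ × Bool)) (a b : ℝ), A ⊆ Set.Icc a b ×ˢ (Set.univ : Set Bool) →
      ξ A ≠ ⊤ :=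
    fun A a b hab => ne_top_of_le_ne_top
      ((isCompact_Icc.prod isCompact_univ).measure_lt_top).ne (measure_mono hab)
  -- zero measure before τ
  have hbefore : ∀ t : ℝ, t < τ → ξ (Set.Icc 0 t ×ˢ ({false} : Set Bool)) = 0 := by
    intro t ht
    rcases le_or_gt 0 t with h0t | h0t
    · obtain ⟨t', ht'S, htt'⟩ := exists_lt_of_lt_csSup ⟨t₀, ht₀⟩ ht
      refine le_antisymm ?_ zero_le
      rw [← ht'S.2]
      exact measure_mono (Set.prod_mono (Set.Icc_subset_Icc le_rfl htt'.le) subset_rfl)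
    · rw [Set.Icc_eq_empty (not_le.2 h0t), Set.empty_prod, measure_empty]
  -- at least one point after τ
  have hafter : ∀ t : ℝ, τ < t → 1 ≤ ξ (Set.Icc 0 t ×ˢ ({false} : Set Bool)) := by
    intro t ht
    refine hξone _ (hmeas _ _ _) fun h => ?_
    have htS : t ∈ {t : ℝ | 0 ≤ t ∧ ξ (Set.Icc 0 t ×ˢ ({false} : Set Bool)) = 0} :=
      ⟨le_trans hτ0 ht.le, h⟩
    exact absurd (le_csSup hbdd htS) (not_le.2 ht)
  -- the atom at (τ, false)
  have hsing : 1 ≤ ξ {((τ : ℝ), false)} := by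
    have hIcc : 1 ≤ ξ (Set.Icc 0 τ ×ˢ ({false} : Set Bool)) := by
      have hset : (⋂ n : ℕ, Set.Icc 0 (τ + 1/(n+1)) ×ˢ ({false} : Set Bool))
          = Set.Icc 0 τ ×ˢ ({false} : Set Bool) := by
        ext p
        simp only [Set.mem_iInter, Set.mem_prod, Set.mem_Icc]
        constructor
        · intro h
          have h0 := h 0
          refine ⟨⟨h0.1.1, ?_⟩, h0.2⟩
          by_contra hc
          obtain ⟨n, hn⟩ := exists_nat_one_div_lt (sub_pos.2 (not_le.1 hc))
          have := (h n).1.2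
          linarith
        · intro h n
          have hp : (0:ℝ) < 1/(n+1) := by positivity
          exact ⟨⟨h.1.1, by linarith [h.1.2]⟩, h.2⟩
      have hdir : Directed (fun x1 x2 => x1 ⊇ x2)
          (fun n : ℕ => Set.Icc 0 (τ + 1/(n+1)) ×ˢ ({false} : Set Bool)) := by
        intro a b
        refine ⟨max a b, ?_, ?_⟩ <;>
          refine Set.prod_mono (Set.Icc_subset_Icc le_rfl (by
            have h1 : ((a:ℝ)+1) ≤ (max a b : ℕ) + 1 := by
              push_cast; simp [le_max_left, le_max_right]
            have h2 : ((b:ℝ)+1) ≤ (max a b : ℕ) + 1 := by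
              push_cast; simp [le_max_left, le_max_right]
            have := one_div_le_one_div_of_le (by positivity : (0:ℝ) < (a:ℝ)+1) h1
            have := one_div_le_one_div_of_le (by positivity : (0:ℝ) < (b:ℝ)+1) h2
            first
              | linarith
              | linarith)) subset_rfl
      have heq := Directed.measure_iInter (μ := ξ)
        (s := fun n : ℕ => Set.Icc 0 (τ + 1/(n+1)) ×ˢ ({false} : Set Bool))
        (fun n => (hmeas _ _ _).nullMeasurableSet) hdir
        ⟨0, hξfin _ 0 (τ+1) (Set.prod_mono (Set.Icc_subset_Icc le_rfl (by norm_num))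
          (Set.subset_univ _))⟩
      rw [hset] at heq
      rw [heq]
      refine le_iInf fun n => hafter _ ?_
      have hp : (0:ℝ) < 1/(n+1) := by positivity
      linarith
    have hIco : ξ (Set.Ico 0 τ ×ˢ ({false} : Set Bool)) = 0 := by
      have hsub : Set.Ico 0 τ ×ˢ ({false} : Set Bool)
          ⊆ ⋃ n : ℕ, Set.Icc 0 (τ - 1/(n+1)) ×ˢ ({false} : Set Bool) := by
        rintro ⟨t, l⟩ ⟨ht, hl⟩
        obtain ⟨n, hn⟩ := exists_nat_one_div_lt (sub_pos.2 ht.2)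
        exact Set.mem_iUnion.2 ⟨n, ⟨⟨ht.1, by linarith⟩, hl⟩⟩
      refine le_antisymm (le_trans (measure_mono hsub) ?_) zero_le
      refine le_trans (measure_iUnion_le _) ?_
      have hz : ∀ n : ℕ, ξ (Set.Icc 0 (τ - 1/(n+1)) ×ˢ ({false} : Set Bool)) = 0 := by
        intro n
        refine hbefore _ ?_
        have hp : (0:ℝ) < 1/(n+1) := by positivity
        linarith
      exact le_of_eq (ENNReal.tsum_eq_zero.2 hz)
    have hsub2 : Set.Icc 0 τ ×ˢ ({false} : Set Bool)
        ⊆ {((τ : ℝ), false)} ∪ Set.Ico 0 τ ×ˢ ({false} : Set Bool) := by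
      rintro ⟨t, l⟩ ⟨ht, hl⟩
      rcases eq_or_lt_of_le ht.2 with h | h
      · left
        simp only [Set.mem_singleton_iff] at hl ⊢
        exact Prod.ext h hl
      · right; exact ⟨⟨ht.1, h⟩, hl⟩
    calc (1 : ENNReal) ≤ ξ (Set.Icc 0 τ ×ˢ ({false} : Set Bool)) := hIcc
      _ ≤ ξ {((τ : ℝ), false)} + ξ (Set.Ico 0 τ ×ˢ ({false} : Set Bool)) :=
          le_trans (measure_mono hsub2) (measure_union_le _ _)
      _ = ξ {((τ : ℝ), false)} := by rw [hIco, add_zero]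
  -- a window around τ with no true atoms
  obtain ⟨δ, hδ0, hδhalf, hδnull⟩ :
      ∃ δ : ℝ, 0 < δ ∧ δ ≤ 1/2 ∧ ξ (Set.Icc (τ - δ) (τ + δ) ×ˢ ({true} : Set Bool)) = 0 := by
    have hset : (⋂ n : ℕ, Set.Icc (τ - 1/(n+2)) (τ + 1/(n+2)) ×ˢ ({true} : Set Bool))
        = ({τ} : Set ℝ) ×ˢ ({true} : Set Bool) := by
      ext p
      simp only [Set.mem_iInter, Set.mem_prod, Set.mem_Icc, Set.mem_singleton_iff]
      constructor
      · intro h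
        refine ⟨?_, (h 0).2⟩
        by_contra hc
        have hd : 0 < |p.1 - τ| := abs_pos.2 (sub_ne_zero.2 hc)
        obtain ⟨n, hn⟩ := exists_nat_one_div_lt hd
        have h1 := (h n).1.1
        have h2 := (h n).1.2
        have hle : 1/((n:ℝ)+2) ≤ 1/((n:ℝ)+1) :=
          one_div_le_one_div_of_le (by positivity) (by linarith)
        cases abs_cases (p.1 - τ) with
        | inl hh => rw [hh.1] at hn; linarith
        | inr hh => rw [hh.1] at hn; linarith
      · rintro ⟨h1, h2⟩ n
        have hp : (0:ℝ) < 1/(n+2) := by positivity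
        exact ⟨⟨by linarith [h1.ge], by linarith [h1.le]⟩, h2⟩
    have hdir : Directed (fun x1 x2 => x1 ⊇ x2)
        (fun n : ℕ => Set.Icc (τ - 1/(n+2)) (τ + 1/(n+2)) ×ˢ ({true} : Set Bool)) := by
      intro a b
      have key : ∀ c d : ℕ, c ≤ d →
          Set.Icc (τ - 1/((d:ℝ)+2)) (τ + 1/((d:ℝ)+2)) ×ˢ ({true} : Set Bool)
          ⊆ Set.Icc (τ - 1/((c:ℝ)+2)) (τ + 1/((c:ℝ)+2)) ×ˢ ({true} : Set Bool) := by
        intro c d hcd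
        have h1 : ((c:ℝ)+2) ≤ (d:ℝ)+2 := by
          have := (Nat.cast_le (α := ℝ)).2 hcd; linarith
        have := one_div_le_one_div_of_le (by positivity : (0:ℝ) < (c:ℝ)+2) h1
        exact Set.prod_mono (Set.Icc_subset_Icc (by linarith) (by linarith)) subset_rfl
      exact ⟨max a b, key a (max a b) (le_max_left a b), key b (max a b) (le_max_right a b)⟩
    have heq := Directed.measure_iInter (μ := ξ)
      (s := fun n : ℕ => Set.Icc (τ - 1/(n+2)) (τ + 1/(n+2)) ×ˢ ({true} : Set Bool))
      (fun n => (hmeas _ _ _).nullMeasurableSet) hdir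
      ⟨0, hξfin _ (τ-1) (τ+1) (Set.prod_mono (Set.Icc_subset_Icc (by linarith) (by linarith))
        (Set.subset_univ _))⟩
    rw [hset, hnoatom] at heq
    have hzero : ∃ n : ℕ, ξ (Set.Icc (τ - 1/(n+2)) (τ + 1/(n+2)) ×ˢ ({true} : Set Bool)) = 0 := by
      by_contra hc
      push_neg at hc
      have : (1 : ENNReal) ≤ ⨅ n : ℕ,
          ξ (Set.Icc (τ - 1/(n+2)) (τ + 1/(n+2)) ×ˢ ({true} : Set Bool)) :=
        le_iInf fun n => hξone _ (hmeas _ _ _) (hc n)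
      rw [← heq] at this
      simp at this
    obtain ⟨n, hn⟩ := hzero
    refine ⟨1/(n+2), by positivity, ?_, hn⟩
    rw [div_le_div_iff₀ (by positivity) (by norm_num)]
    have : (0:ℝ) ≤ (n:ℝ) := Nat.cast_nonneg n
    linarith
  -- k and its properties
  set k := ξ (Set.Icc 0 (τ + δ) ×ˢ ({true} : Set Bool)) with hkdef
  obtain ⟨m, hm⟩ : ∃ m : ℕ, k = m :=
    hξnat _ (hmeas _ _ _) (hξfin _ 0 (τ+δ) (Set.prod_mono subset_rfl (Set.subset_univ _)))
  have hks : ∀ s : ℝ, τ - δ ≤ s → s ≤ τ + δ →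
      ξ (Set.Icc 0 s ×ˢ ({true} : Set Bool)) = k := by
    intro s h1 h2
    refine le_antisymm
      (measure_mono (Set.prod_mono (Set.Icc_subset_Icc le_rfl h2) subset_rfl)) ?_
    calc k ≤ ξ (Set.Icc 0 s ×ˢ ({true} : Set Bool))
          + ξ (Set.Icc (τ - δ) (τ + δ) ×ˢ ({true} : Set Bool)) := by
          rw [hkdef]
          refine le_trans (measure_mono ?_) (measure_union_le _ _)
          rintro ⟨t, l⟩ ⟨ht, hl⟩
          rcases le_or_gt t s with h | h
          · exact Or.inl ⟨⟨ht.1, h⟩, hl⟩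
          · exact Or.inr ⟨⟨le_trans h1 h.le, ht.2⟩, hl⟩
      _ = ξ (Set.Icc 0 s ×ˢ ({true} : Set Bool)) := by rw [hδnull, add_zero]
  have hJξ : Jmap ξ = k := hks τ (by linarith) (by linarith)
  have hk0 : τ < δ → k = 0 := by
    intro h
    rw [← hks (τ - δ) le_rfl (by linarith), Set.Icc_eq_empty (by intro hc; linarith [hc]),
      Set.empty_prod, measure_empty]
  -- abbreviations
  set b3' := max 0 (τ - δ/2) with hb3'def
  set b3 := max 0 (τ - (3/4)*δ) with hb3def
  have hb3'0 : 0 ≤ b3' := le_max_left _ _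
  have hb3'τ : b3' ≤ τ := max_le hτ0 (by linarith)
  have hb30 : 0 ≤ b3 := le_max_left _ _
  have hb3τ : b3 ≤ τ := max_le hτ0 (by linarith)
  have hb3l : τ - δ ≤ b3 := le_trans (by linarith) (le_max_right _ _)
  -- test functions
  obtain ⟨fM, hfMc, hfMs, hfM0, hfM1, hfMone, hfMsupp⟩ :=
    mk_testAll (-1) (τ+1) 1 (by linarith) one_pos
  obtain ⟨f1, hf1c, hf1s, hf10, hf11, hf1one, hf1supp⟩ :=
    mk_test 0 b3' (δ/4) hb3'0 (by positivity) false
  obtain ⟨f2, hf2c, hf2s, hf20, hf21, hf2one, hf2supp⟩ :=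
    mk_test τ τ (δ/2) le_rfl (by positivity) false
  obtain ⟨f3, hf3c, hf3s, hf30, hf31, hf3one, hf3supp⟩ :=
    mk_test 0 b3 (δ/4) hb30 (by positivity) true
  obtain ⟨f4, hf4c, hf4s, hf40, hf41, hf4one, hf4supp⟩ :=
    mk_test 0 (τ + (3/4)*δ) (δ/4) (by linarith) (by positivity) true
  have hptfin : ξ {((τ : ℝ), false)} ≠ ⊤ := by
    refine hξfin _ τ τ ?_
    rintro p hp
    rw [Set.mem_singleton_iff] at hp
    subst hp
    exact ⟨Set.mem_Icc.2 ⟨le_rfl, le_rfl⟩, trivial⟩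
  have hpt1 : (1:ℝ) ≤ (ξ {((τ : ℝ), false)}).toReal := by
    have := ENNReal.toReal_mono hptfin hsing
    simpa using this
  -- ξ-side integral bounds and resulting eventual statements
  have hEM : ∀ᶠ n in atTop, 1/2 < ∫ p, fM p ∂(ξn n) := by
    have hint : Integrable fM ξ := hfMc.integrable_of_hasCompactSupport hfMs
    have h1' : ∀ p ∈ ({((τ : ℝ), false)} : Set (ℝ × Bool)), 1 ≤ fM p := by
      rintro p hp
      rw [Set.mem_singleton_iff] at hp
      subst hp
      exact le_of_eq (hfMone _ (Set.mem_Icc.2 ⟨by linarith, by linarith⟩)).symm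
    have hlow := meas_le_integral hfM0 (measurableSet_singleton _) h1' hint
    exact (hconv fM hfMc hfMs).eventually_const_lt (by linarith [hlow.2, hpt1])
  have hE1 : ∀ᶠ n in atTop, (δ/2 ≤ τ → ∫ p, f1 p ∂(ξn n) < 1/2) := by
    by_cases hc1 : δ/2 ≤ τ
    · have hb3'eq : b3' = τ - δ/2 := max_eq_right (by linarith)
      have hup := integral_le_meas (μ := ξ) hf1c hf10 (hmeas 0 (b3' + δ/4) false) ?_ ?_
      · have hz : ξ (Set.Icc 0 (b3' + δ/4) ×ˢ ({false} : Set Bool)) = 0 :=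
          hbefore _ (by rw [hb3'eq]; linarith)
        rw [hz] at hup
        simp only [ENNReal.toReal_zero] at hup
        exact ((hconv f1 hf1c hf1s).eventually_lt_const
          (by linarith [hup.2])).mono fun n h _ => h
      · filter_upwards [hξae] with p hp
        by_cases hz : f1 p = 0
        · rw [hz]; exact Set.indicator_apply_nonneg fun _ => zero_le_one
        · obtain ⟨hp1, hp2⟩ := hf1supp p hz
          rw [Set.indicator_of_mem (Set.mem_prod.2 ⟨Set.mem_Icc.2 ⟨not_lt.1 hp, hp1.2⟩,
            by simpa using hp2⟩)]
          exact hf11 p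
      · exact hξfin _ 0 (b3' + δ/4) (Set.prod_mono subset_rfl (Set.subset_univ _))
    · exact Eventually.of_forall fun n h => absurd h hc1
  have hE2 : ∀ᶠ n in atTop, 1/2 < ∫ p, f2 p ∂(ξn n) := by
    have hint : Integrable f2 ξ := hf2c.integrable_of_hasCompactSupport hf2s
    have h1' : ∀ p ∈ ({((τ : ℝ), false)} : Set (ℝ × Bool)), 1 ≤ f2 p := by
      rintro p hp
      rw [Set.mem_singleton_iff] at hp
      subst hp
      exact le_of_eq (hf2one _ (Set.mem_Icc.2 ⟨le_rfl, le_rfl⟩) rfl).symm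
    have hlow := meas_le_integral hf20 (measurableSet_singleton _) h1' hint
    exact (hconv f2 hf2c hf2s).eventually_const_lt (by linarith [hlow.2, hpt1])
  have hE3 : ∀ᶠ n in atTop, (m:ℝ) - 1/2 < ∫ p, f3 p ∂(ξn n) := by
    have hint : Integrable f3 ξ := hf3c.integrable_of_hasCompactSupport hf3s
    have hlow := meas_le_integral hf30 (hmeas 0 b3 true)
      (fun p hp => le_of_eq (hf3one p hp.1 (by simpa using hp.2)).symm) hint
    have hval : ξ (Set.Icc 0 b3 ×ˢ ({true} : Set Bool)) = (m : ENNReal) := by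
      rw [hks b3 hb3l (by linarith), hm]
    rw [hval] at hlow
    have : ((m : ENNReal)).toReal = (m:ℝ) := by simp
    rw [this] at hlow
    exact (hconv f3 hf3c hf3s).eventually_const_lt (by linarith [hlow.2])
  have hE4 : ∀ᶠ n in atTop, ∫ p, f4 p ∂(ξn n) < (m:ℝ) + 1/2 := by
    have hup := integral_le_meas (μ := ξ) hf4c hf40 (hmeas 0 (τ + δ) true) ?_ ?_
    · have hval : ξ (Set.Icc 0 (τ + δ) ×ˢ ({true} : Set Bool)) = (m : ENNReal) := by
        rw [← hkdef, hm]
      rw [hval] at hup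
      have h' : ((m : ENNReal)).toReal = (m:ℝ) := by simp
      rw [h'] at hup
      exact (hconv f4 hf4c hf4s).eventually_lt_const (by linarith [hup.2])
    · filter_upwards [hξae] with p hp
      by_cases hz : f4 p = 0
      · rw [hz]; exact Set.indicator_apply_nonneg fun _ => zero_le_one
      · obtain ⟨hp1, hp2⟩ := hf4supp p hz
        rw [Set.indicator_of_mem (Set.mem_prod.2 ⟨Set.mem_Icc.2 ⟨not_lt.1 hp, by linarith [hp1.2]⟩,
          by simpa using hp2⟩)]
        exact hf41 p
    · exact hξfin _ 0 (τ + δ) (Set.prod_mono subset_rfl (Set.subset_univ _))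
  -- the eventual equality
  have hconst : ∀ᶠ n in atTop, Jmap (ξn n) = Jmap ξ := by
    filter_upwards [hEM, hE1, hE2, hE3, hE4] with n hM1 h1 h2 h3 h4
    obtain ⟨κ, hκ, y, hy0, hyeq⟩ := hξn n
    haveI := hκ
    have hμone : ∀ A : Set (ℝ × Bool), MeasurableSet A → ξn n A ≠ 0 → 1 ≤ ξn n A := by
      intro A hA h; rw [hyeq] at h ⊢; exact pm_one_le y hA h
    have hμnat : ∀ A : Set (ℝ × Bool), MeasurableSet A → ξn n A ≠ ⊤ → ∃ m' : ℕ, ξn n A = m' := by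
      intro A hA h; rw [hyeq] at h ⊢; exact pm_nat y hA h
    have hμae : ∀ᵐ p ∂(ξn n), ¬ p.1 < 0 := by
      have h0 : ξn n {p : ℝ × Bool | p.1 < 0} = 0 := by rw [hyeq]; exact pm_neg_null y hy0
      refine ae_iff.2 ?_
      simpa only [not_not] using h0
    -- finiteness on the big box
    have hintM : Integrable fM (ξn n) := by
      by_contra hni
      rw [integral_undef hni] at hM1
      norm_num at hM1
    have hMfin : ξn n (Set.Icc (-1 : ℝ) (τ+1) ×ˢ (Set.univ : Set Bool)) ≠ ⊤ :=
      (meas_le_integral hfM0 (measurableSet_Icc.prod MeasurableSet.univ)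
        (fun p hp => le_of_eq (hfMone p hp.1).symm) hintM).1
    have hfinsub : ∀ A : Set (ℝ × Bool), A ⊆ Set.Icc (-1 : ℝ) (τ+1) ×ˢ (Set.univ : Set Bool) →
        ξn n A ≠ ⊤ :=
      fun A h => ne_top_of_le_ne_top hMfin (measure_mono h)
    have hintegrable : ∀ f : ℝ × Bool → ℝ, Continuous f → (∀ p, 0 ≤ f p) → (∀ p, f p ≤ 1) →
        (∀ p : ℝ × Bool, f p ≠ 0 → -1 ≤ p.1 ∧ p.1 ≤ τ + 1) → Integrable f (ξn n) := by
      intro f hc h0 hle hs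
      refine (integral_le_meas hc h0 (measurableSet_Icc.prod MeasurableSet.univ)
        (Eventually.of_forall fun p => ?_) hMfin).1
      by_cases hz : f p = 0
      · rw [hz]; exact Set.indicator_apply_nonneg fun _ => zero_le_one
      · rw [Set.indicator_of_mem (Set.mem_prod.2 ⟨Set.mem_Icc.2 (hs p hz), Set.mem_univ _⟩)]
        exact hle p
    -- E2': at least one false point in [0, τ+δ/2]
    have hE2' : 1 ≤ ξn n (Set.Icc 0 (τ + δ/2) ×ˢ ({false} : Set Bool)) := by
      have hup := integral_le_meas (μ := ξn n) hf2c hf20 (hmeas 0 (τ + δ/2) false) ?_ ?_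
      · refine hμone _ (hmeas _ _ _) fun hz => ?_
        rw [hz] at hup
        simp only [ENNReal.toReal_zero] at hup
        linarith [hup.2]
      · filter_upwards [hμae] with p hp
        by_cases hz : f2 p = 0
        · rw [hz]; exact Set.indicator_apply_nonneg fun _ => zero_le_one
        · obtain ⟨hp1, hp2⟩ := hf2supp p hz
          rw [Set.indicator_of_mem (Set.mem_prod.2 ⟨Set.mem_Icc.2 ⟨not_lt.1 hp, hp1.2⟩, by simpa using hp2⟩)]
          exact hf21 p
      · exact hfinsub _ (Set.prod_mono (Set.Icc_subset_Icc (by norm_num) (by linarith))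
          (Set.subset_univ _))
    -- upper bound on σ
    have hub : ∀ t ∈ {t : ℝ | 0 ≤ t ∧ ξn n (Set.Icc 0 t ×ˢ ({false} : Set Bool)) = 0},
        t ≤ τ + δ/2 := by
      intro t ht
      by_contra hc
      have hineq : 1 ≤ ξn n (Set.Icc 0 t ×ˢ ({false} : Set Bool)) :=
        le_trans hE2' (measure_mono (Set.prod_mono
          (Set.Icc_subset_Icc le_rfl (not_le.1 hc).le) subset_rfl))
      rw [ht.2] at hineq
      simp at hineq
    have hσu : tau0 (ξn n) ≤ τ + δ/2 := Real.sSup_le hub (by linarith)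
    -- lower bound on σ
    have hσl : b3' ≤ tau0 (ξn n) := by
      rcases le_or_gt (δ/2) τ with hc1 | hc1
      · have hb3'eq : b3' = τ - δ/2 := max_eq_right (by linarith)
        have hintf1 : Integrable f1 (ξn n) := by
          refine hintegrable f1 hf1c hf10 hf11 fun p hp => ?_
          obtain ⟨hp1, _⟩ := hf1supp p hp
          exact ⟨by linarith [hp1.1], by linarith [hp1.2, hb3'τ]⟩
        have hlow := meas_le_integral hf10 (hmeas 0 b3' false)
          (fun p hp => le_of_eq (hf1one p hp.1 (by simpa using hp.2)).symm) hintf1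
        have hz : ξn n (Set.Icc 0 b3' ×ˢ ({false} : Set Bool)) = 0 := by
          by_contra hzz
          have h1le := hμone _ (hmeas _ _ _) hzz
          have := ENNReal.toReal_mono hlow.1 h1le
          simp only [ENNReal.toReal_one] at this
          linarith [hlow.2, h1 hc1]
        have hmem : b3' ∈ {t : ℝ | 0 ≤ t ∧ ξn n (Set.Icc 0 t ×ˢ ({false} : Set Bool)) = 0} :=
          ⟨hb3'0, hz⟩
        exact le_csSup ⟨τ + δ/2, hub⟩ hmem
      · have hb3'eq : b3' = 0 := max_eq_left (by linarith)
        rw [hb3'eq]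
        exact Real.sSup_nonneg fun t ht => ht.1
    -- E3': at least k true points in [0, b3']
    have hE3' : k ≤ ξn n (Set.Icc 0 b3' ×ˢ ({true} : Set Bool)) := by
      rcases le_or_gt ((3/4)*δ) τ with hc3 | hc3
      · have hb3eq : b3 = τ - (3/4)*δ := max_eq_right (by linarith)
        have hb3'eq : b3' = τ - δ/2 := max_eq_right (by linarith)
        have hup := integral_le_meas (μ := ξn n) hf3c hf30 (hmeas 0 b3' true) ?_ ?_
        · have hfin3 : ξn n (Set.Icc 0 b3' ×ˢ ({true} : Set Bool)) ≠ ⊤ := by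
            refine hfinsub _ (Set.prod_mono (Set.Icc_subset_Icc (by norm_num) (by linarith))
              (Set.subset_univ _))
          obtain ⟨m3, hm3⟩ := hμnat _ (hmeas 0 b3' true) hfin3
          rw [hm3] at hup ⊢
          have htor : ((m3 : ENNReal)).toReal = (m3:ℝ) := by simp
          rw [htor] at hup
          have hmm : (m:ℝ) < (m3:ℝ) + 1 := by linarith [hup.2, h3]
          have : m ≤ m3 := by exact_mod_cast Nat.lt_succ_iff.1 (by exact_mod_cast hmm)
          rw [hm]
          exact_mod_cast this
        · filter_upwards [hμae] with p hp
          by_cases hz : f3 p = 0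
          · rw [hz]; exact Set.indicator_apply_nonneg fun _ => zero_le_one
          · obtain ⟨hp1, hp2⟩ := hf3supp p hz
            have hup1 : p.1 ≤ b3' := by rw [hb3'eq]; rw [hb3eq] at hp1; linarith [hp1.2]
            rw [Set.indicator_of_mem (Set.mem_prod.2 ⟨Set.mem_Icc.2 ⟨not_lt.1 hp, hup1⟩, by simpa using hp2⟩)]
            exact hf31 p
        · exact hfinsub _ (Set.prod_mono (Set.Icc_subset_Icc (by norm_num) (by linarith))
            (Set.subset_univ _))
      · rw [hk0 (by linarith)]
        exact zero_le
    -- E4': at most k true points in [0, τ+δ/2]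
    have hE4' : ξn n (Set.Icc 0 (τ + δ/2) ×ˢ ({true} : Set Bool)) ≤ k := by
      have hintf4 : Integrable f4 (ξn n) := by
        refine hintegrable f4 hf4c hf40 hf41 fun p hp => ?_
        obtain ⟨hp1, _⟩ := hf4supp p hp
        exact ⟨by linarith [hp1.1], by linarith [hp1.2]⟩
      have hlow := meas_le_integral hf40 (hmeas 0 (τ + δ/2) true)
        (fun p hp => le_of_eq (hf4one p (Set.mem_Icc.2 ⟨hp.1.1, by linarith [hp.1.2]⟩)
          (by simpa using hp.2)).symm) hintf4
      obtain ⟨m4, hm4⟩ := hμnat _ (hmeas 0 (τ + δ/2) true) hlow.1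
      rw [hm4] at hlow ⊢
      have htor : ((m4 : ENNReal)).toReal = (m4:ℝ) := by simp
      rw [htor] at hlow
      have hmm : (m4:ℝ) < (m:ℝ) + 1 := by linarith [hlow.2, h4]
      have : m4 ≤ m := by exact_mod_cast Nat.lt_succ_iff.1 (by exact_mod_cast hmm)
      rw [hm]
      exact_mod_cast this
    -- conclude
    have hfn : Jmap (ξn n) = k := by
      refine le_antisymm ?_ ?_
      · exact le_trans (measure_mono (Set.prod_mono
          (Set.Icc_subset_Icc le_rfl hσu) subset_rfl)) hE4'
      · exact le_trans hE3' (measure_mono (Set.prod_mono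
          (Set.Icc_subset_Icc le_rfl hσl) subset_rfl))
    rw [hfn, hJξ]
  exact Tendsto.congr' (hconst.mono fun n h => h.symm) tendsto_const_nhds
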